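/- Let G be a graph of register-logic form with respect to output set O, and let u ∈ O. Local complementation at u yields a graph of register-logic form with respect to O if and only if u has at most one neighbor in V \ O. -/

import Mathlib

/-- Register-logic form: no edges between non-output vertices. -/
def RLForm {V : Type*} (G : SimpleGraph V) (O : Finset V) [DecidableEq V] : Prop :=
  ∀ v w : V, G.Adj v w → v ∈ O ∨ w ∈ O

/-- Local complementation at a vertex `u`: toggle every edge between two
distinct neighbors of `u`, leaving all other adjacencies unchanged. -/
def localComp {V : Type*} (G : SimpleGraph V) (u : V) : SimpleGraph V where
  Adj v w := v ≠ w ∧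
    ((G.Adj u v ∧ G.Adj u w ∧ ¬ G.Adj v w) ∨ (¬ (G.Adj u v ∧ G.Adj u w) ∧ G.Adj v w))
  symm := by
    constructor
    intro v w ⟨hne, h⟩
    refine ⟨hne.symm, ?_⟩
    rw [G.adj_comm w v]
    tauto
  loopless := ⟨fun v h => h.1 rfl⟩

theorem localComp_output_RL_iff {V : Type*} [Fintype V] [DecidableEq V]
    (G : SimpleGraph V) [DecidableRel G.Adj] (O : Finset V) (hRL : RLForm G O)
    (u : V) (hu : u ∈ O) :
    RLForm (localComp G u) O ↔
      ((G.neighborFinset u).filter (fun v => v ∉ O)).card ≤ 1 := by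
  rw [Finset.card_le_one]
  constructor
  · intro h v hv w hw
    simp only [Finset.mem_filter, SimpleGraph.mem_neighborFinset] at hv hw
    by_contra hne
    exact (h v w ⟨hne, Or.inl ⟨hv.1, hw.1,
      fun hadj => ((hRL v w hadj).elim hv.2 hw.2)⟩⟩).elim hv.2 hw.2
  · intro h v w hadj
    by_contra hc
    push_neg at hc
    obtain ⟨hne, hcase⟩ := hadj
    rcases hcase with ⟨h1, h2, _⟩ | ⟨_, h2⟩
    · exact hne (h v (by simp [hc.1, h1]) w (by simp [hc.2, h2]))
    · exact (hRL v w h2).elim hc.1 hc.2
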